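/- Let Q^{(1)}, …, Q^{(n)} be symmetric tropical Metzler matrices of size m (with m ≥ 1), over the signed tropical numbers, and suppose all diagonal entries Q^{(k)}_{ii} are tropically positive reals and all off-diagonal entries are tropically negative reals (i.e., all entries finite). Consider real symmetric matrices 𝐐^{(k)}(t) with entries 𝐐^{(k)}_{ij}(t) = sign(Q^{(k)}_{ij}) · t^{|Q^{(k)}_{ij}|}. Suppose there exist x ∈ ℝ^n and λ > 0 such that for all i, j ∈ [m]: 2λ + max over k with Q^{(k)}_{ij} tropically negative of (|Q^{(k)}_{ij}| + x_k) ≤ (1/2)·max over l of (Q^{(l)}_{ii} + x_l with Q^{(l)}_{ii} positive) + (1/2)·max over l of (Q^{(l)}_{jj} + x_l with Q^{(l)}_{jj} positive). Then for every t > (2(m−1)n)^{1/(2λ)} with t > 1, the point 𝐱 = (t^{x_1}, …, t^{x_n}) satisfies 𝐐_{ii}(t)(𝐱) · 𝐐_{jj}(t)(𝐱) ≥ (m−1)²·(𝐐_{ij}(t)(𝐱))² and 𝐐_{ii}(t)(𝐱) ≥ 0 for all i < j, where 𝐐(t)(𝐱) = Σ_k 𝐱_k 𝐐^{(k)}(t);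 consequently Σ_k 𝐱_k 𝐐^{(k)}(t) is positive semidefinite. -/

import Mathlib

/-- The real symmetric matrix `Σ_k t^{x_k} 𝐐^{(k)}(t)` where
`𝐐^{(k)}_{ii}(t) = t^{d k i}` and `𝐐^{(k)}_{ij}(t) = -t^{o k i j}` for `i ≠ j`. -/
noncomputable def archMatrix (n m : ℕ) (d : Fin n → Fin m → ℝ)
    (o : Fin n → Fin m → Fin m → ℝ) (x : Fin n → ℝ) (t : ℝ) :
    Matrix (Fin m) (Fin m) ℝ :=
  Matrix.of fun i j =>
    ∑ k, Real.rpow t (x k) *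
      (if i = j then Real.rpow t (d k i) else -Real.rpow t (o k i j))

/-- A real symmetric `m × m` matrix with nonnegative diagonal satisfying the
diagonal-dominance-type condition `(m-1)^2 A_ij^2 ≤ A_ii A_jj` is PSD. -/
lemma psd_of_dominance {m : ℕ} (hm : 1 ≤ m) (A : Matrix (Fin m) (Fin m) ℝ)
    (hherm : A.IsHermitian) (hdiag : ∀ i, 0 ≤ A i i)
    (hod : ∀ i j : Fin m, i ≠ j → ((m : ℝ) - 1) ^ 2 * (A i j) ^ 2 ≤ A i i * A j j) :
    A.PosSemidef := by
  refine Matrix.PosSemidef.of_dotProduct_mulVec_nonneg hherm fun v => ?_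
  have hQ : dotProduct (star v) (A.mulVec v) = ∑ i, ∑ j, v i * (A i j * v j) := by
    simp [dotProduct, Matrix.mulVec, Finset.mul_sum]
  rw [hQ]
  set y : Fin m → ℝ := fun i => |v i| * Real.sqrt (A i i) with hy
  have hynn : ∀ i, 0 ≤ y i := fun i => mul_nonneg (abs_nonneg _) (Real.sqrt_nonneg _)
  have hdiag' : ∀ i, v i * (A i i * v i) = y i ^ 2 := by
    intro i
    have : Real.sqrt (A i i) ^ 2 = A i i := Real.sq_sqrt (hdiag i)
    rw [hy]; simp only [mul_pow, sq_abs]; rw [this]; ring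
  have hkey : ∀ i j : Fin m, i ≠ j →
      ((m : ℝ) - 1) * -(v i * (A i j * v j)) ≤ y i * y j := by
    intro i j hij
    have hm1 : (0:ℝ) ≤ (m : ℝ) - 1 := by
      have : (1:ℝ) ≤ (m:ℝ) := by exact_mod_cast hm
      linarith
    have h1 : ((m : ℝ) - 1) * |A i j| ≤ Real.sqrt (A i i) * Real.sqrt (A j j) := by
      have hsq : (((m : ℝ) - 1) * |A i j|) ^ 2 ≤
          (Real.sqrt (A i i) * Real.sqrt (A j j)) ^ 2 := by
        have := hod i j hij
        rw [mul_pow, mul_pow, Real.sq_sqrt (hdiag i), Real.sq_sqrt (hdiag j), sq_abs]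
        exact this
      have h2 : 0 ≤ Real.sqrt (A i i) * Real.sqrt (A j j) :=
        mul_nonneg (Real.sqrt_nonneg _) (Real.sqrt_nonneg _)
      calc ((m : ℝ) - 1) * |A i j|
          = Real.sqrt ((((m : ℝ) - 1) * |A i j|) ^ 2) :=
            (Real.sqrt_sq (mul_nonneg hm1 (abs_nonneg _))).symm
        _ ≤ Real.sqrt ((Real.sqrt (A i i) * Real.sqrt (A j j)) ^ 2) :=
            Real.sqrt_le_sqrt hsq
        _ = Real.sqrt (A i i) * Real.sqrt (A j j) := Real.sqrt_sq h2
    calc ((m : ℝ) - 1) * -(v i * (A i j * v j))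
        ≤ ((m : ℝ) - 1) * |v i * (A i j * v j)| :=
          mul_le_mul_of_nonneg_left (neg_le_abs _) hm1
      _ = (((m : ℝ) - 1) * |A i j|) * (|v i| * |v j|) := by
          rw [abs_mul, abs_mul]; ring
      _ ≤ (Real.sqrt (A i i) * Real.sqrt (A j j)) * (|v i| * |v j|) :=
          mul_le_mul_of_nonneg_right h1 (mul_nonneg (abs_nonneg _) (abs_nonneg _))
      _ = y i * y j := by rw [hy]; ring
  -- split the quadratic form
  have hsplit : ∑ i, ∑ j, v i * (A i j * v j) =
      (∑ i, y i ^ 2) + ∑ i, ∑ j ∈ Finset.univ.erase i, v i * (A i j * v j) := by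
    rw [← Finset.sum_add_distrib]
    refine Finset.sum_congr rfl fun i _ => ?_
    rw [← hdiag' i, ← Finset.add_sum_erase _ _ (Finset.mem_univ i)]
  rw [hsplit]
  set G := ∑ i, ∑ j ∈ Finset.univ.erase i, v i * (A i j * v j) with hG
  set T := ∑ i, y i ^ 2 with hT
  have hTnn : 0 ≤ T := Finset.sum_nonneg fun i _ => sq_nonneg _
  rcases eq_or_lt_of_le hm with hm1 | hm2
  · -- m = 1 : no off-diagonal terms
    have hG0 : G = 0 := by
      rw [hG]
      refine Finset.sum_eq_zero fun i _ => Finset.sum_eq_zero fun j hj => ?_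
      have hji := Finset.ne_of_mem_erase hj
      subst hm1
      exact absurd (Subsingleton.elim j i) hji
    rw [hG0, add_zero]; exact hTnn
  · have hm2' : (1:ℝ) < (m:ℝ) := by exact_mod_cast hm2
    have hm1pos : (0:ℝ) < (m:ℝ) - 1 := by linarith
    have hGbound : ((m:ℝ) - 1) * -G ≤ ((m:ℝ) - 1) * T := by
      have hP : (∑ i, y i) ^ 2 ≤ T * m := by
        have := Finset.sum_mul_sq_le_sq_mul_sq Finset.univ y (fun _ => (1:ℝ))
        simpa [hT] using this
      calc ((m:ℝ) - 1) * -G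
          = ∑ i, ∑ j ∈ Finset.univ.erase i, ((m:ℝ) - 1) * -(v i * (A i j * v j)) := by
            rw [hG, ← Finset.sum_neg_distrib, Finset.mul_sum]
            refine Finset.sum_congr rfl fun i _ => ?_
            rw [← Finset.sum_neg_distrib, Finset.mul_sum]
        _ ≤ ∑ i, ∑ j ∈ Finset.univ.erase i, y i * y j := by
            refine Finset.sum_le_sum fun i _ => Finset.sum_le_sum fun j hj => ?_
            exact hkey i j (Ne.symm (Finset.ne_of_mem_erase hj))
        _ = ∑ i, (y i * (∑ j, y j) - y i ^ 2) := Finset.sum_congr rfl fun i _ => by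
            rw [← Finset.mul_sum, Finset.sum_erase_eq_sub (Finset.mem_univ i), mul_sub, sq]
        _ = (∑ i, y i) ^ 2 - T := by
            rw [Finset.sum_sub_distrib, ← Finset.sum_mul, hT, sq]
        _ ≤ ((m:ℝ) - 1) * T := by
            have := hP
            nlinarith
    have : -G ≤ T := le_of_mul_le_mul_left hGbound hm1pos
    linarith

/-- For tropical Metzler matrices with tropically positive real
diagonal entries `d k i` and tropically negative real off-diagonal entries
`⊖ (o k i j)`, monomially lifted to `𝐐^{(k)}(t)`, if `x ∈ ℝ^n` and `λ > 0`
satisfy the strict tropical feasibility inequalities, then for every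
`t > (2(m-1)n)^{1/(2λ)}` with `t > 1`, the point `𝐱 = (t^{x_1},…,t^{x_n})`
satisfies the order-1 and weighted order-2 minor inequalities for
`A = Σ_k 𝐱_k 𝐐^{(k)}(t)`, and consequently `A` is positive semidefinite. -/
theorem nonarchimedean_feasibility_implies_archimedean (n m : ℕ)
    (hn : 0 < n) (hm : 1 ≤ m)
    (d : Fin n → Fin m → ℝ) (o : Fin n → Fin m → Fin m → ℝ)
    (hosymm : ∀ k i j, o k i j = o k j i)
    (x : Fin n → ℝ) (lam : ℝ) (hlam : 0 < lam)
    (hineq : ∀ i j : Fin m, i ≠ j →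
      2 * lam + (⨆ k, o k i j + x k) ≤
        (1 / 2) * (⨆ k, d k i + x k) + (1 / 2) * (⨆ k, d k j + x k))
    (t : ℝ) (ht1 : 1 < t)
    (ht : Real.rpow (2 * ((m : ℝ) - 1) * (n : ℝ)) (1 / (2 * lam)) < t) :
    (∀ i, 0 ≤ archMatrix n m d o x t i i) ∧
    (∀ i j : Fin m, i ≠ j →
      ((m : ℝ) - 1) ^ 2 * (archMatrix n m d o x t i j) ^ 2 ≤
        archMatrix n m d o x t i i * archMatrix n m d o x t j j) ∧
    (archMatrix n m d o x t).PosSemidef := by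
  have ht0 : (0:ℝ) < t := lt_trans one_pos ht1
  have hne : Nonempty (Fin n) := ⟨⟨0, hn⟩⟩
  rw [Real.rpow_eq_pow] at ht
  set A := archMatrix n m d o x t with hA
  have hbdd : ∀ f : Fin n → ℝ, BddAbove (Set.range f) :=
    fun f => (Set.finite_range f).bddAbove
  -- entry formulas
  have hAdiag : ∀ i, A i i = ∑ k, t ^ (d k i + x k) := by
    intro i
    simp only [hA, archMatrix, Matrix.of_apply, if_pos rfl, if_true, Real.rpow_eq_pow]
    refine Finset.sum_congr rfl fun k _ => ?_
    rw [Real.rpow_add ht0]; ring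
  have hAoff : ∀ i j, i ≠ j → A i j = -∑ k, t ^ (o k i j + x k) := by
    intro i j hij
    simp only [hA, archMatrix, Matrix.of_apply, if_neg hij, Real.rpow_eq_pow]
    rw [← Finset.sum_neg_distrib]
    refine Finset.sum_congr rfl fun k _ => ?_
    rw [Real.rpow_add ht0]; ring
  -- diagonal bounds
  have hdiagnn : ∀ i, 0 ≤ A i i := by
    intro i
    rw [hAdiag i]
    exact Finset.sum_nonneg fun k _ => Real.rpow_nonneg ht0.le _
  have hlow : ∀ i, t ^ (⨆ k, d k i + x k) ≤ A i i := by
    intro i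
    obtain ⟨k0, hk0⟩ := exists_eq_ciSup_of_finite (f := fun k => d k i + x k)
    rw [hAdiag i, ← hk0]
    exact Finset.single_le_sum (f := fun k => t ^ (d k i + x k))
      (fun k _ => Real.rpow_nonneg ht0.le _) (Finset.mem_univ k0)
  -- off-diagonal bounds
  have hoffnn : ∀ i j, 0 ≤ ∑ k, t ^ (o k i j + x k) :=
    fun i j => Finset.sum_nonneg fun k _ => Real.rpow_nonneg ht0.le _
  have hup : ∀ i j, (∑ k, t ^ (o k i j + x k)) ≤
      (n : ℝ) * t ^ (⨆ k, o k i j + x k) := by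
    intro i j
    calc (∑ k, t ^ (o k i j + x k))
        ≤ ∑ _k : Fin n, t ^ (⨆ k, o k i j + x k) :=
          Finset.sum_le_sum fun k _ =>
            (Real.rpow_le_rpow_left_iff ht1).2 (le_ciSup (f := fun k => o k i j + x k) (hbdd _) k)
      _ = (n : ℝ) * t ^ (⨆ k, o k i j + x k) := by
          rw [Finset.sum_const, Finset.card_univ, Fintype.card_fin, nsmul_eq_mul]
  -- the key constant bound
  have hm1 : (0:ℝ) ≤ (m : ℝ) - 1 := by
    have : (1:ℝ) ≤ (m:ℝ) := by exact_mod_cast hm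
    linarith
  have hconst : (((m:ℝ) - 1) * (n : ℝ)) ^ 2 ≤ t ^ (4 * lam) := by
    set a : ℝ := 2 * ((m : ℝ) - 1) * (n : ℝ) with ha_def
    have ha : 0 ≤ a := by positivity
    have h1 : a < t ^ (2 * lam) := by
      have h2 : (a ^ (1 / (2 * lam))) ^ (2 * lam) <
          t ^ (2 * lam) :=
        Real.rpow_lt_rpow (Real.rpow_nonneg ha _) ht (by positivity)
      rwa [← Real.rpow_mul ha, one_div, inv_mul_cancel₀ (by positivity),
        Real.rpow_one] at h2
    have h3 : t ^ (4 * lam) = t ^ (2 * lam) * t ^ (2 * lam) := by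
      rw [← Real.rpow_add ht0]; ring_nf
    have h4 : a * a < t ^ (2 * lam) * t ^ (2 * lam) :=
      mul_self_lt_mul_self ha h1
    have h5 : (0:ℝ) ≤ ((m:ℝ) - 1) * (n : ℝ) := by positivity
    nlinarith [h4, h3, h5]
  -- the main minor inequalities
  have hod : ∀ i j : Fin m, i ≠ j →
      ((m : ℝ) - 1) ^ 2 * (A i j) ^ 2 ≤ A i i * A j j := by
    intro i j hij
    have hDij := hineq i j hij
    set S := ⨆ k, o k i j + x k with hS
    set Di := ⨆ k, d k i + x k with hDi
    set Dj := ⨆ k, d k j + x k with hDj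
    have hsq : (A i j) ^ 2 ≤ ((n : ℝ) * t ^ S) ^ 2 := by
      rw [hAoff i j hij, neg_sq]
      exact pow_le_pow_left₀ (hoffnn i j) (hup i j) 2
    calc ((m : ℝ) - 1) ^ 2 * (A i j) ^ 2
        ≤ ((m : ℝ) - 1) ^ 2 * ((n : ℝ) * t ^ S) ^ 2 :=
          mul_le_mul_of_nonneg_left hsq (sq_nonneg _)
      _ = (((m:ℝ) - 1) * (n : ℝ)) ^ 2 * (t ^ S * t ^ S) := by ring
      _ ≤ t ^ (4 * lam) * (t ^ S * t ^ S) :=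
          mul_le_mul_of_nonneg_right hconst
            (mul_nonneg (Real.rpow_nonneg ht0.le _) (Real.rpow_nonneg ht0.le _))
      _ = t ^ (4 * lam + (S + S)) := by
          rw [Real.rpow_add ht0, Real.rpow_add ht0]
      _ ≤ t ^ (Di + Dj) := by
          apply (Real.rpow_le_rpow_left_iff ht1).2
          linarith
      _ = t ^ Di * t ^ Dj := Real.rpow_add ht0 _ _
      _ ≤ A i i * A j j :=
          mul_le_mul (hlow i) (hlow j) (Real.rpow_nonneg ht0.le _) (hdiagnn i)
  -- hermitian
  have hherm : A.IsHermitian := by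
    refine Matrix.ext fun i j => ?_
    simp only [Matrix.conjTranspose_apply, star_trivial]
    by_cases h : i = j
    · subst h; rfl
    · rw [hAoff j i (Ne.symm h), hAoff i j h]
      congr 1
      exact Finset.sum_congr rfl fun k _ => by rw [hosymm k j i]
  exact ⟨hdiagnn, hod, psd_of_dominance hm A hherm hdiagnn hod⟩
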